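/- The probability p_2 = 3·∫_0^1 ∫_0^1 (1-a)^3·(3 - (1-a)(3-b))^2/(3 - (1-a)(2-b))^3 db da equals (5319/16)·ln 3 - 350·ln 2 - 245/2. -/

import Mathlib

open MeasureTheory Real

noncomputable def gexpr (a : ℝ) : ℝ :=
  (1 - a) ^ 2 * (Real.log (2 + a) - Real.log (1 + 2 * a)
    + 2 * (1 - a) / (2 + a) - 2 * (1 - a) / (1 + 2 * a)
    - (1 - a) ^ 2 / (2 * (2 + a) ^ 2) + (1 - a) ^ 2 / (2 * (1 + 2 * a) ^ 2))

noncomputable def Hfun (a : ℝ) : ℝ :=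
  -(((1 - a) ^ 3 / 3 - 117) * Real.log (2 + a)
    + (99 / 16 - (1 - a) ^ 3 / 3) * Real.log (1 + 2 * a)
    + (4175 / 192 + 1269 / 32 * a - 83 / 16 * a ^ 2 + 11 / 24 * a ^ 3)
    - 81 / (2 * (2 + a)) + 81 / (64 * (1 + 2 * a)))

lemma gexpr_cont : ContinuousOn gexpr (Set.uIcc (0:ℝ) 1) := by
  rw [Set.uIcc_of_le (by norm_num : (0:ℝ) ≤ 1)]
  have h2 : ∀ x ∈ Set.Icc (0:ℝ) 1, (2 + x) ≠ 0 := by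
    intro x hx; have := hx.1; positivity
  have h12 : ∀ x ∈ Set.Icc (0:ℝ) 1, (1 + 2 * x) ≠ 0 := by
    intro x hx; have := hx.1; positivity
  have h2sq : ∀ x ∈ Set.Icc (0:ℝ) 1, (2 * (2 + x) ^ 2) ≠ 0 := by
    intro x hx; have := hx.1; positivity
  have h12sq : ∀ x ∈ Set.Icc (0:ℝ) 1, (2 * (1 + 2 * x) ^ 2) ≠ 0 := by
    intro x hx; have := hx.1; positivity
  unfold gexpr
  have c1 : ContinuousOn (fun x : ℝ => Real.log (2 + x)) (Set.Icc (0:ℝ) 1) :=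
    ContinuousOn.log (by fun_prop) h2
  have c2 : ContinuousOn (fun x : ℝ => Real.log (1 + 2 * x)) (Set.Icc (0:ℝ) 1) :=
    ContinuousOn.log (by fun_prop) h12
  have c3 : ContinuousOn (fun x : ℝ => 2 * (1 - x) / (2 + x)) (Set.Icc (0:ℝ) 1) :=
    ContinuousOn.div (by fun_prop) (by fun_prop) h2
  have c4 : ContinuousOn (fun x : ℝ => 2 * (1 - x) / (1 + 2 * x)) (Set.Icc (0:ℝ) 1) :=
    ContinuousOn.div (by fun_prop) (by fun_prop) h12
  have c5 : ContinuousOn (fun x : ℝ => (1 - x) ^ 2 / (2 * (2 + x) ^ 2)) (Set.Icc (0:ℝ) 1) :=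
    ContinuousOn.div (by fun_prop) (by fun_prop) h2sq
  have c6 : ContinuousOn (fun x : ℝ => (1 - x) ^ 2 / (2 * (1 + 2 * x) ^ 2)) (Set.Icc (0:ℝ) 1) :=
    ContinuousOn.div (by fun_prop) (by fun_prop) h12sq
  exact ContinuousOn.mul (by fun_prop) (((((c1.sub c2).add c3).sub c4).sub c5).add c6)

theorem final_calc : 3 * (Hfun 1 - Hfun 0) =
    (5319 / 16) * Real.log 3 - 350 * Real.log 2 - 245 / 2 := by
  unfold Hfun
  norm_num [Real.log_one]
  ring

lemma H_deriv (a : ℝ) (ha0 : 0 ≤ a) : HasDerivAt Hfun (gexpr a) a := by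
  have h2p : (0:ℝ) < 2 + a := by linarith
  have h12p : (0:ℝ) < 1 + 2 * a := by linarith
  have h2ne : (2 + a) ≠ 0 := ne_of_gt h2p
  have h12ne : (1 + 2 * a) ≠ 0 := ne_of_gt h12p
  have hl1 : HasDerivAt (fun a : ℝ => 2 + a) 1 a := (hasDerivAt_id a).const_add 2
  have hl2 : HasDerivAt (fun a : ℝ => 1 + 2 * a) (2 * 1) a :=
    ((hasDerivAt_id a).const_mul 2).const_add 1
  have hlog1 : HasDerivAt (fun a : ℝ => Real.log (2 + a)) ((2 + a)⁻¹ * 1) a :=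
    (Real.hasDerivAt_log h2ne).comp a hl1
  have hlog2 : HasDerivAt (fun a : ℝ => Real.log (1 + 2 * a)) ((1 + 2 * a)⁻¹ * (2 * 1)) a :=
    (Real.hasDerivAt_log h12ne).comp (h₂ := Real.log) a hl2
  have hone : HasDerivAt (fun a : ℝ => 1 - a) (-1) a := (hasDerivAt_id a).const_sub 1
  have hcube : HasDerivAt (fun a : ℝ => (1 - a) ^ 3) (↑3 * (1 - a) ^ 2 * (-1)) a := hone.pow 3
  have hc1 : HasDerivAt (fun a : ℝ => (1 - a) ^ 3 / 3 - 117)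
      ((↑3 * (1 - a) ^ 2 * (-1)) / 3) a := (hcube.div_const 3).sub_const 117
  have hc2 : HasDerivAt (fun a : ℝ => 99 / 16 - (1 - a) ^ 3 / 3)
      (-((↑3 * (1 - a) ^ 2 * (-1)) / 3)) a := (hcube.div_const 3).const_sub (99/16)
  have hm1 := hc1.mul hlog1
  have hm2 := hc2.mul hlog2
  have hpoly : HasDerivAt (fun a : ℝ => 4175 / 192 + 1269 / 32 * a - 83 / 16 * a ^ 2 + 11 / 24 * a ^ 3)
      (1269 / 32 * 1 - 83 / 16 * (↑2 * a ^ 1) + 11 / 24 * (↑3 * a ^ 2)) a := by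
    exact ((((hasDerivAt_id a).const_mul (1269/32)).const_add (4175/192)).sub
      ((hasDerivAt_pow 2 a).const_mul (83/16))).add ((hasDerivAt_pow 3 a).const_mul (11/24))
  have hden1 : HasDerivAt (fun a : ℝ => 2 * (2 + a)) (2 * 1) a := hl1.const_mul 2
  have hden1ne : 2 * (2 + a) ≠ 0 := by positivity
  have hq1 : HasDerivAt (fun a : ℝ => 81 / (2 * (2 + a)))
      ((0 * (2 * (2 + a)) - 81 * (2 * 1)) / (2 * (2 + a)) ^ 2) a :=
    (hasDerivAt_const a 81).div hden1 hden1ne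
  have hden2 : HasDerivAt (fun a : ℝ => 64 * (1 + 2 * a)) (64 * (2 * 1)) a := hl2.const_mul 64
  have hden2ne : 64 * (1 + 2 * a) ≠ 0 := by positivity
  have hq2 : HasDerivAt (fun a : ℝ => 81 / (64 * (1 + 2 * a)))
      ((0 * (64 * (1 + 2 * a)) - 81 * (64 * (2 * 1))) / (64 * (1 + 2 * a)) ^ 2) a :=
    (hasDerivAt_const a 81).div hden2 hden2ne
  have htotal := ((((hm1.add hm2).add hpoly).sub hq1).add hq2).neg
  refine HasDerivAt.congr_deriv (f := Hfun) htotal ?_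
  unfold gexpr
  field_simp
  ring

lemma inner_eq (a : ℝ) (ha0 : 0 ≤ a) (ha1 : a ≤ 1) :
    (∫ b in (0:ℝ)..1,
      (1 - a) ^ 3 * (3 - (1 - a) * (3 - b)) ^ 2 / (3 - (1 - a) * (2 - b)) ^ 3) = gexpr a := by
  have key : ∀ b ∈ Set.Icc (0:ℝ) 1, (0:ℝ) < 3 - (1 - a) * (2 - b) := by
    intro b hb
    obtain ⟨hb0, hb1⟩ := hb
    nlinarith [mul_nonneg (sub_nonneg.2 ha1) (sub_nonneg.2 hb1)]
  set F : ℝ → ℝ := fun b => (1 - a) ^ 2 * (Real.log (3 - (1 - a) * (2 - b))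
      + 2 * (1 - a) / (3 - (1 - a) * (2 - b))
      - (1 - a) ^ 2 / (2 * (3 - (1 - a) * (2 - b)) ^ 2)) with hF
  have hderiv : ∀ b ∈ Set.uIcc (0:ℝ) 1,
      HasDerivAt F ((1 - a) ^ 3 * (3 - (1 - a) * (3 - b)) ^ 2 / (3 - (1 - a) * (2 - b)) ^ 3) b := by
    intro b hb
    rw [Set.uIcc_of_le (by norm_num : (0:ℝ) ≤ 1)] at hb
    have ht : (0:ℝ) < 3 - (1 - a) * (2 - b) := key b hb
    have htne : (3 - (1 - a) * (2 - b)) ≠ 0 := ne_of_gt ht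
    have h1 : HasDerivAt (fun b : ℝ => 3 - (1 - a) * (2 - b)) (-((1 - a) * (-1))) b :=
      (((hasDerivAt_id b).const_sub 2).const_mul (1 - a)).const_sub 3
    have hlog : HasDerivAt (fun b : ℝ => Real.log (3 - (1 - a) * (2 - b)))
        ((3 - (1 - a) * (2 - b))⁻¹ * (-((1 - a) * (-1)))) b :=
      (Real.hasDerivAt_log htne).comp (h₂ := Real.log) b h1
    have hdiv1 : HasDerivAt (fun b : ℝ => 2 * (1 - a) / (3 - (1 - a) * (2 - b)))
        ((0 * (3 - (1 - a) * (2 - b)) - 2 * (1 - a) * (-((1 - a) * (-1)))) /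
          (3 - (1 - a) * (2 - b)) ^ 2) b :=
      (hasDerivAt_const b (2 * (1 - a))).div h1 htne
    have hden : HasDerivAt (fun b : ℝ => 2 * (3 - (1 - a) * (2 - b)) ^ 2)
        (2 * (↑2 * (3 - (1 - a) * (2 - b)) ^ 1 * (-((1 - a) * (-1))))) b :=
      (h1.pow 2).const_mul 2
    have hdenne : 2 * (3 - (1 - a) * (2 - b)) ^ 2 ≠ 0 := by positivity
    have hdiv2 : HasDerivAt (fun b : ℝ => (1 - a) ^ 2 / (2 * (3 - (1 - a) * (2 - b)) ^ 2))
        ((0 * (2 * (3 - (1 - a) * (2 - b)) ^ 2) -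
          (1 - a) ^ 2 * (2 * (↑2 * (3 - (1 - a) * (2 - b)) ^ 1 * (-((1 - a) * (-1)))))) /
          (2 * (3 - (1 - a) * (2 - b)) ^ 2) ^ 2) b :=
      (hasDerivAt_const b ((1 - a) ^ 2)).div hden hdenne
    have := (((hlog.add hdiv1).sub hdiv2).const_mul ((1 - a) ^ 2))
    refine HasDerivAt.congr_deriv (f := F) this ?_
    field_simp
    ring
  have hint : IntervalIntegrable
      (fun b => (1 - a) ^ 3 * (3 - (1 - a) * (3 - b)) ^ 2 / (3 - (1 - a) * (2 - b)) ^ 3)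
      MeasureTheory.volume 0 1 := by
    apply ContinuousOn.intervalIntegrable
    apply ContinuousOn.div (by fun_prop) (by fun_prop)
    intro x hx
    rw [Set.uIcc_of_le (by norm_num : (0:ℝ) ≤ 1)] at hx
    have := key x hx
    positivity
  rw [intervalIntegral.integral_eq_sub_of_hasDerivAt hderiv hint]
  have e1 : (3 - (1 - a) * (2 - (1:ℝ))) = 2 + a := by ring
  have e0 : (3 - (1 - a) * (2 - (0:ℝ))) = 1 + 2 * a := by ring
  simp only [hF, gexpr, e1, e0]
  ring

theorem stit_p2_value :
    3 * (∫ a in (0:ℝ)..1, ∫ b in (0:ℝ)..1,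
        (1 - a) ^ 3 * (3 - (1 - a) * (3 - b)) ^ 2 / (3 - (1 - a) * (2 - b)) ^ 3) =
      (5319 / 16) * Real.log 3 - 350 * Real.log 2 - 245 / 2 := by
  have hcongr : (∫ a in (0:ℝ)..1, ∫ b in (0:ℝ)..1,
      (1 - a) ^ 3 * (3 - (1 - a) * (3 - b)) ^ 2 / (3 - (1 - a) * (2 - b)) ^ 3)
      = ∫ a in (0:ℝ)..1, gexpr a := by
    apply intervalIntegral.integral_congr
    intro a ha
    rw [Set.uIcc_of_le (by norm_num : (0:ℝ) ≤ 1)] at ha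
    exact inner_eq a ha.1 ha.2
  have houter : (∫ a in (0:ℝ)..1, gexpr a) = Hfun 1 - Hfun 0 := by
    apply intervalIntegral.integral_eq_sub_of_hasDerivAt
    · intro a ha
      rw [Set.uIcc_of_le (by norm_num : (0:ℝ) ≤ 1)] at ha
      exact H_deriv a ha.1
    · exact gexpr_cont.intervalIntegrable
  rw [hcongr, houter]
  exact final_calc
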